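/- Assume Weil's bound: for distinct c₁,…,c_k in a finite field F of odd order q with quadratic character χ, |∑_{x∈F} χ(x-c₁)⋯χ(x-c_k)| ≤ (k-1)√q. Then for disjoint finite sets A, B ⊆ F with |A| + |B| = n, the number N of x ∈ F such that x - a is a nonzero square for all a ∈ A and x - b is a non-square for all b ∈ B satisfies |N - q/2^n| ≤ ((n-2+2^{1-n})√q + n)/2 whenever n ≥ 1; in particular N > 0 when q is sufficiently large relative to n. -/

import Mathlib

open Finset

private lemma two_mul_sum_card_powerset {α : Type*} [DecidableEq α] (s : Finset α) :
    2 * ∑ t ∈ s.powerset, (t.card : ℝ) = s.card * 2 ^ s.card := by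
  induction s using Finset.induction_on with
  | empty => simp
  | @insert a s ha ih =>
    rw [Finset.sum_powerset_insert ha]
    have h1 : ∑ t ∈ s.powerset, ((insert a t).card : ℝ)
        = ∑ t ∈ s.powerset, ((t.card : ℝ) + 1) := by
      refine Finset.sum_congr rfl fun t ht => ?_
      rw [Finset.card_insert_of_notMem fun h => ha (Finset.mem_powerset.mp ht h)]
      push_cast; ring
    rw [h1, Finset.sum_add_distrib, Finset.sum_const, Finset.card_powerset,
      Finset.card_insert_of_notMem ha]
    simp only [nsmul_eq_mul, mul_one]
    push_cast
    rw [pow_succ]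
    nlinarith [ih]

/-- Assuming Weil's bound for the quadratic character, the number N of x with
x - a a nonzero square for all a ∈ A and x - b a non-square for all b ∈ B satisfies
|N - q/2^n| ≤ ((n - 2 + 2^{1-n})√q + n)/2, where n = |A| + |B| ≥ 1. -/
theorem paley_count_estimate (F : Type*) [Field F] [Fintype F] [DecidableEq F]
    (hodd : Odd (Fintype.card F))
    (hWeil : ∀ (k : ℕ) (c : Fin k → F), Function.Injective c → 1 ≤ k →
      |∑ x : F, ∏ i : Fin k, ((quadraticChar F (x - c i) : ℤ) : ℝ)| ≤
        ((k : ℝ) - 1) * Real.sqrt (Fintype.card F))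
    (A B : Finset F) (hAB : Disjoint A B) (n : ℕ) (hn : n = A.card + B.card) (hn1 : 1 ≤ n) :
    |((univ.filter fun x : F =>
        (∀ a ∈ A, x - a ≠ 0 ∧ IsSquare (x - a)) ∧ (∀ b ∈ B, ¬ IsSquare (x - b))).card : ℝ)
        - (Fintype.card F : ℝ) / 2 ^ n| ≤
      (((n : ℝ) - 2 + (2 : ℝ) ^ ((1 : ℤ) - (n : ℤ))) * Real.sqrt (Fintype.card F) + n) / 2 := by
  have h2n : (0:ℝ) < 2 ^ n := by positivity
  set q : ℕ := Fintype.card F with hq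
  set rq : ℝ := Real.sqrt q with hrq
  have hrq0 : 0 ≤ rq := Real.sqrt_nonneg _
  set χ : F → ℝ := fun y => ((quadraticChar F y : ℤ) : ℝ) with hχdef
  have hχ0 : χ 0 = 0 := by simp [hχdef]
  have hχcases : ∀ y : F, y ≠ 0 → χ y = 1 ∨ χ y = -1 := by
    intro y hy
    rcases quadraticChar_dichotomy hy with h | h
    · exact Or.inl (by simp only [hχdef]; exact_mod_cast h)
    · exact Or.inr (by simp only [hχdef]; exact_mod_cast h)
  have hχabs : ∀ y : F, |χ y| ≤ 1 := by
    intro y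
    by_cases hy : y = 0
    · simp [hy, hχ0]
    · rcases hχcases y hy with h | h <;> simp [h]
  set ε : F → ℝ := fun c => if c ∈ A then 1 else -1 with hεdef
  have hεabs : ∀ c, |ε c| = 1 := by
    intro c; by_cases h : c ∈ A <;> simp [hεdef, h]
  set C : Finset F := A ∪ B with hCdef
  have hCcard : C.card = n := by
    rw [hCdef, card_union_of_disjoint hAB, hn]
  set g : F → F → ℝ := fun x c => (1 + ε c * χ (x - c)) / 2 with hgdef
  have hg01 : ∀ x c, 0 ≤ g x c ∧ g x c ≤ 1 := by
    intro x c
    have h1 : |ε c * χ (x - c)| ≤ 1 := by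
      rw [abs_mul, hεabs, one_mul]; exact hχabs _
    rw [abs_le] at h1
    constructor <;> simp only [hgdef] <;> [linarith [h1.1]; linarith [h1.2]]
  set f : F → ℝ := fun x => ∏ c ∈ C, g x c with hfdef
  have hfC : ∀ x ∈ C, 0 ≤ f x ∧ f x ≤ 1 / 2 := by
    intro x hx
    have hgx : g x x = 1 / 2 := by simp [hgdef, hχ0]
    refine ⟨Finset.prod_nonneg fun c _ => (hg01 x c).1, ?_⟩
    calc f x = g x x * ∏ c ∈ C.erase x, g x c := (Finset.mul_prod_erase C _ hx).symm
      _ ≤ (1/2) * 1 := by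
          rw [hgx]
          exact mul_le_mul_of_nonneg_left
            (Finset.prod_le_one (fun c _ => (hg01 x c).1) (fun c _ => (hg01 x c).2))
            (by norm_num)
      _ = 1/2 := by ring
  set P : F → Prop := fun x =>
    (∀ a ∈ A, x - a ≠ 0 ∧ IsSquare (x - a)) ∧ (∀ b ∈ B, ¬ IsSquare (x - b)) with hPdef
  have hfP : ∀ x : F, x ∉ C → f x = if P x then 1 else 0 := by
    intro x hxC
    have hne : ∀ c ∈ C, x - c ≠ 0 := by
      intro c hc h
      apply hxC
      rw [sub_eq_zero] at h
      rwa [h]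
    by_cases hx : P x
    · rw [if_pos hx]
      refine Finset.prod_eq_one fun c hc => ?_
      rcases Finset.mem_union.mp hc with hcA | hcB
      · have hχ1 : χ (x - c) = 1 := by
          simp only [hχdef]
          exact_mod_cast (quadraticChar_one_iff_isSquare (hx.1 c hcA).1).mpr (hx.1 c hcA).2
        simp [hgdef, hεdef, hcA, hχ1]
      · have hcA : c ∉ A := fun h => Finset.disjoint_left.mp hAB h hcB
        have hχ1 : χ (x - c) = -1 := by
          simp only [hχdef]
          exact_mod_cast quadraticChar_neg_one_iff_not_isSquare.mpr (hx.2 c hcB)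
        simp [hgdef, hεdef, hcA, hχ1]
    · rw [if_neg hx]
      simp only [hPdef, not_and_or] at hx
      rcases hx with hx | hx
      · push_neg at hx
        obtain ⟨a, haA, ha⟩ := hx
        have haC : a ∈ C := Finset.mem_union.mpr (Or.inl haA)
        have hne' : x - a ≠ 0 := hne a haC
        have hnsq : ¬ IsSquare (x - a) := ha hne'
        have hχ1 : χ (x - a) = -1 := by
          simp only [hχdef]
          exact_mod_cast quadraticChar_neg_one_iff_not_isSquare.mpr hnsq
        refine Finset.prod_eq_zero haC ?_
        simp [hgdef, hεdef, haA, hχ1]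
      · push_neg at hx
        obtain ⟨b, hbB, hb⟩ := hx
        have hbC : b ∈ C := Finset.mem_union.mpr (Or.inr hbB)
        have hbA : b ∉ A := fun h => Finset.disjoint_left.mp hAB h hbB
        have hχ1 : χ (x - b) = 1 := by
          simp only [hχdef]
          exact_mod_cast (quadraticChar_one_iff_isSquare (hne b hbC)).mpr hb
        refine Finset.prod_eq_zero hbC ?_
        simp [hgdef, hεdef, hbA, hχ1]
  have hind : ∀ x ∈ C, (if P x then (1:ℝ) else 0) = 0 := by
    intro x hx
    rw [if_neg]
    intro hPx
    rcases Finset.mem_union.mp hx with h | h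
    · exact (hPx.1 x h).1 (sub_self x)
    · exact hPx.2 x h ⟨0, by rw [sub_self, mul_zero]⟩
  -- the count as a sum of indicators
  have hNsum : ((univ.filter P).card : ℝ) = ∑ x : F, if P x then (1:ℝ) else 0 := by
    rw [Finset.card_filter]
    push_cast
    exact Finset.sum_congr rfl fun x _ => by split <;> simp
  -- step 1 : |∑ f - N| ≤ n / 2
  have hstep1 : |(∑ x : F, f x) - ((univ.filter P).card : ℝ)| ≤ (n : ℝ) / 2 := by
    rw [hNsum]
    have h1 : ∑ x ∈ C, (f x - if P x then (1:ℝ) else 0)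
        = ∑ x : F, (f x - if P x then (1:ℝ) else 0) :=
      Finset.sum_subset (Finset.subset_univ C)
        (fun x _ hx => by rw [hfP x hx, sub_self])
    have h2 : (∑ x : F, f x) - (∑ x : F, if P x then (1:ℝ) else 0)
        = ∑ x ∈ C, f x := by
      rw [← Finset.sum_sub_distrib, ← h1]
      exact Finset.sum_congr rfl fun x hx => by rw [hind x hx, sub_zero]
    rw [h2]
    have h3 : |∑ x ∈ C, f x| ≤ ∑ x ∈ C, (1/2 : ℝ) := by
      refine (Finset.abs_sum_le_sum_abs _ _).trans (Finset.sum_le_sum fun x hx => ?_)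
      rw [abs_of_nonneg (hfC x hx).1]
      exact (hfC x hx).2
    rw [Finset.sum_const, hCcard] at h3
    simpa [div_eq_mul_inv] using h3
  -- the character sums
  set W : Finset F → ℝ := fun S => ∑ x : F, ∏ c ∈ S, χ (x - c) with hWdef
  -- expansion of ∑ f
  have hexp : ∑ x : F, f x = (∑ S ∈ C.powerset, (∏ c ∈ S, ε c) * W S) / 2 ^ n := by
    have h1 : ∀ x : F, f x
        = (∑ S ∈ C.powerset, (∏ c ∈ S, ε c) * ∏ c ∈ S, χ (x - c)) / 2 ^ n := by
      intro x
      have h2 : ∏ c ∈ C, (ε c * χ (x - c) + 1)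
          = ∑ S ∈ C.powerset, (∏ c ∈ S, ε c) * ∏ c ∈ S, χ (x - c) := by
        rw [Finset.prod_add]
        exact Finset.sum_congr rfl fun S _ => by
          rw [Finset.prod_const_one, mul_one, Finset.prod_mul_distrib]
      simp only [hfdef, hgdef]
      rw [Finset.prod_div_distrib, Finset.prod_const, hCcard, ← h2]
      congr 1
      exact Finset.prod_congr rfl fun c _ => by ring
    calc ∑ x : F, f x
        = ∑ x : F, (∑ S ∈ C.powerset, (∏ c ∈ S, ε c) * ∏ c ∈ S, χ (x - c)) / 2 ^ n :=
          Finset.sum_congr rfl fun x _ => h1 x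
      _ = (∑ x : F, ∑ S ∈ C.powerset, (∏ c ∈ S, ε c) * ∏ c ∈ S, χ (x - c)) / 2 ^ n := by
          rw [Finset.sum_div]
      _ = (∑ S ∈ C.powerset, (∏ c ∈ S, ε c) * W S) / 2 ^ n := by
          rw [Finset.sum_comm]
          congr 1
          exact Finset.sum_congr rfl fun S _ => by rw [hWdef, Finset.mul_sum]
  -- Weil bound applied to each nonempty S
  have hW : ∀ S ∈ C.powerset.erase ∅, |W S| ≤ ((S.card : ℝ) - 1) * rq := by
    intro S hS
    have hSne : S ≠ ∅ := (Finset.mem_erase.mp hS).1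
    have hk : 1 ≤ S.card := Finset.card_pos.mpr (Finset.nonempty_iff_ne_empty.mpr hSne)
    set e := S.equivFin with hedef
    have hinj : Function.Injective (fun i : Fin S.card => ((e.symm i : {x // x ∈ S}) : F)) :=
      fun i j h => e.symm.injective (Subtype.ext h)
    have hweil := hWeil S.card _ hinj hk
    have hprod : ∀ x : F,
        (∏ i : Fin S.card, ((quadraticChar F (x - ((e.symm i : {y // y ∈ S}) : F)) : ℤ) : ℝ))
          = ∏ d ∈ S, χ (x - d) := by
      intro x
      rw [show (fun i : Fin S.card =>
          ((quadraticChar F (x - ((e.symm i : {y // y ∈ S}) : F)) : ℤ) : ℝ))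
          = fun i => (fun s : {y // y ∈ S} => χ (x - (s : F))) (e.symm i) from rfl]
      rw [Equiv.prod_comp e.symm (fun s : {y // y ∈ S} => χ (x - (s : F)))]
      exact Finset.prod_coe_sort S (fun d => χ (x - d))
    calc |W S| = |∑ x : F, ∏ i : Fin S.card,
          ((quadraticChar F (x - ((e.symm i : {y // y ∈ S}) : F)) : ℤ) : ℝ)| := by
          rw [hWdef]
          congr 1
          exact Finset.sum_congr rfl fun x _ => (hprod x).symm
      _ ≤ ((S.card : ℝ) - 1) * rq := hweil
  -- sum of (|S| - 1) over nonempty S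
  have hcardsum : ∑ S ∈ C.powerset.erase ∅, ((S.card : ℝ) - 1)
      = (n : ℝ) * 2 ^ n / 2 - 2 ^ n + 1 := by
    have h0 : (∅ : Finset F) ∈ C.powerset := Finset.empty_mem_powerset C
    have h1 := Finset.add_sum_erase C.powerset (fun S => ((S.card : ℝ) - 1)) h0
    have h2 : ∑ S ∈ C.powerset, ((S.card : ℝ) - 1)
        = (∑ S ∈ C.powerset, (S.card : ℝ)) - 2 ^ n := by
      rw [Finset.sum_sub_distrib, Finset.sum_const, Finset.card_powerset, hCcard]
      push_cast; ring
    have h3 := two_mul_sum_card_powerset C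
    rw [hCcard] at h3
    simp only [Finset.card_empty, Nat.cast_zero] at h1
    rw [h2] at h1
    linarith
  -- step 2
  have hstep2 : |(∑ x : F, f x) - (q : ℝ) / 2 ^ n|
      ≤ ((n : ℝ) * 2 ^ n / 2 - 2 ^ n + 1) * rq / 2 ^ n := by
    have h0 : (∅ : Finset F) ∈ C.powerset := Finset.empty_mem_powerset C
    have hW0 : (∏ c ∈ (∅ : Finset F), ε c) * W ∅ = (q : ℝ) := by
      simp [hWdef, hq]
    have hsplit : ∑ S ∈ C.powerset, (∏ c ∈ S, ε c) * W S
        = (q : ℝ) + ∑ S ∈ C.powerset.erase ∅, (∏ c ∈ S, ε c) * W S := by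
      rw [← Finset.add_sum_erase C.powerset _ h0, hW0]
    rw [hexp, hsplit]
    have heq : ((q : ℝ) + ∑ S ∈ C.powerset.erase ∅, (∏ c ∈ S, ε c) * W S) / 2 ^ n
        - (q : ℝ) / 2 ^ n = (∑ S ∈ C.powerset.erase ∅, (∏ c ∈ S, ε c) * W S) / 2 ^ n := by
      ring
    rw [heq, abs_div, abs_of_pos h2n]
    gcongr
    calc |∑ S ∈ C.powerset.erase ∅, (∏ c ∈ S, ε c) * W S|
        ≤ ∑ S ∈ C.powerset.erase ∅, |(∏ c ∈ S, ε c) * W S| :=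
          Finset.abs_sum_le_sum_abs _ _
      _ ≤ ∑ S ∈ C.powerset.erase ∅, ((S.card : ℝ) - 1) * rq := by
          refine Finset.sum_le_sum fun S hS => ?_
          rw [abs_mul]
          have hε1 : |∏ c ∈ S, ε c| = 1 := by
            rw [Finset.abs_prod]
            exact Finset.prod_eq_one fun c _ => hεabs c
          rw [hε1, one_mul]
          exact hW S hS
      _ = ((n : ℝ) * 2 ^ n / 2 - 2 ^ n + 1) * rq := by
          rw [← Finset.sum_mul, hcardsum]
  -- combine
  have htri : |((univ.filter P).card : ℝ) - (q : ℝ) / 2 ^ n|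
      ≤ (n : ℝ) / 2 + ((n : ℝ) * 2 ^ n / 2 - 2 ^ n + 1) * rq / 2 ^ n := by
    calc |((univ.filter P).card : ℝ) - (q : ℝ) / 2 ^ n|
        ≤ |((univ.filter P).card : ℝ) - ∑ x : F, f x|
          + |(∑ x : F, f x) - (q : ℝ) / 2 ^ n| := abs_sub_le _ _ _
      _ ≤ (n : ℝ) / 2 + ((n : ℝ) * 2 ^ n / 2 - 2 ^ n + 1) * rq / 2 ^ n := by
          rw [abs_sub_comm]
          exact add_le_add hstep1 hstep2
  have hz : (2 : ℝ) ^ ((1 : ℤ) - (n : ℤ)) = 2 / 2 ^ n := by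
    rw [zpow_sub₀ (two_ne_zero), zpow_one, zpow_natCast]
  have hfinal : (n : ℝ) / 2 + ((n : ℝ) * 2 ^ n / 2 - 2 ^ n + 1) * rq / 2 ^ n
      = (((n : ℝ) - 2 + 2 / 2 ^ n) * rq + n) / 2 := by
    field_simp
    ring
  rw [hz]
  exact htri.trans_eq hfinal
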